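/- arXiv:1006.0277 — 2 statements merged into one kernel-verified Lean document; each statement's English description precedes it below -/
import Mathlib

section
/- With z*(p) defined by ∫_0^{z*} x^p f(x) dx = ∫_{z*}^∞ x^p f(x) dx for the half-Gaussian density f, the derivative of ρ*(p) = 1 − F(z*(p)) with respect to p equals (∫_0^{z*} x^p (ln x) f(x) dx − ∫_{z*}^∞ x^p (ln x) f(x) dx) / (2 (z*)^p), and this quantity is negative. -/
open MeasureTheory Set Filter Topology

/-- Density of `|X|` for `X` standard Gaussian. -/
noncomputable def halfGaussianPdf (z : ℝ) : ℝ :=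
  Real.sqrt (2 / Real.pi) * Real.exp (-z ^ 2 / 2)

/-- C.d.f. of `|X|` for `X` standard Gaussian. -/
noncomputable def halfGaussianCdf (x : ℝ) : ℝ :=
  ∫ t in (0:ℝ)..x, halfGaussianPdf t

lemma hg_cont : Continuous halfGaussianPdf := by
  unfold halfGaussianPdf; fun_prop

lemma hg_pos (x : ℝ) : 0 < halfGaussianPdf x := by
  unfold halfGaussianPdf
  exact mul_pos (Real.sqrt_pos.mpr (by positivity)) (Real.exp_pos _)

lemma hg_le_one (x : ℝ) : halfGaussianPdf x ≤ 1 := by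
  unfold halfGaussianPdf
  have h1 : Real.sqrt (2 / Real.pi) ≤ 1 := by
    rw [show (1:ℝ) = Real.sqrt 1 by simp]
    apply Real.sqrt_le_sqrt
    rw [div_le_one Real.pi_pos]
    linarith [Real.pi_gt_three]
  have h2 : Real.exp (-x ^ 2 / 2) ≤ 1 := by
    rw [Real.exp_le_one_iff]
    nlinarith [sq_nonneg x]
  nlinarith [Real.sqrt_nonneg (2 / Real.pi), Real.exp_pos (-x ^ 2 / 2)]

lemma hg_integrableOn_rpow {s : ℝ} (hs : -1 < s) :
    IntegrableOn (fun x : ℝ => x ^ s * halfGaussianPdf x) (Ioi 0) := by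
  have h := (integrableOn_rpow_mul_exp_neg_mul_sq (b := 1/2) (by norm_num) hs).const_mul
    (Real.sqrt (2 / Real.pi))
  have h' : IntegrableOn (fun x : ℝ => Real.sqrt (2 / Real.pi) * (x ^ s * Real.exp (-(1/2 : ℝ) * x ^ 2))) (Ioi 0) := h
  refine h'.congr_fun ?_ measurableSet_Ioi
  intro x _
  show Real.sqrt (2 / Real.pi) * (x ^ s * Real.exp (-(1/2:ℝ) * x ^ 2)) = x ^ s * (Real.sqrt (2 / Real.pi) * Real.exp (-x ^ 2 / 2))
  rw [show -x ^ 2 / 2 = -(1/2 : ℝ) * x ^ 2 by ring]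
  ring
lemma rpow_le_sum {x e a : ℝ} (hx : 0 < x) (ha : 0 < a) (h1 : a ≤ e) (h2 : e ≤ 3) :
    x ^ e ≤ x ^ a + x ^ (3:ℝ) := by
  rcases le_total x 1 with h | h
  · have h3 : x ^ e ≤ x ^ a := Real.rpow_le_rpow_of_exponent_ge hx h h1
    exact h3.trans (le_add_of_nonneg_right (Real.rpow_nonneg hx.le _))
  · have h3 : x ^ e ≤ x ^ (3:ℝ) := Real.rpow_le_rpow_of_exponent_le h h2
    exact h3.trans (le_add_of_nonneg_left (Real.rpow_nonneg hx.le _))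

lemma abs_log_le {p x : ℝ} (hp : 0 < p) (hx : 0 < x) :
    |Real.log x| ≤ (4 / p) * (x ^ (p/4 : ℝ) + x ^ (-(p/4) : ℝ)) := by
  have h4 : (0:ℝ) < p / 4 := by linarith
  have hx4 : (0:ℝ) < x ^ (p/4 : ℝ) := Real.rpow_pos_of_pos hx _
  have hx4' : (0:ℝ) < x ^ (-(p/4) : ℝ) := Real.rpow_pos_of_pos hx _
  rcases le_total 1 x with h | h
  · rw [abs_of_nonneg (Real.log_nonneg h)]
    have hl : Real.log (x ^ (p/4 : ℝ)) ≤ x ^ (p/4 : ℝ) - 1 :=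
      Real.log_le_sub_one_of_pos hx4
    rw [Real.log_rpow hx] at hl
    have hstep : Real.log x ≤ (4 / p) * (x ^ (p/4 : ℝ) - 1) := by
      have h5 := mul_le_mul_of_nonneg_left hl (show (0:ℝ) ≤ 4 / p by positivity)
      calc Real.log x = (4 / p) * (p / 4 * Real.log x) := by field_simp
        _ ≤ (4 / p) * (x ^ (p/4 : ℝ) - 1) := h5
    calc Real.log x ≤ (4 / p) * (x ^ (p/4 : ℝ) - 1) := hstep
      _ ≤ (4 / p) * (x ^ (p/4 : ℝ) + x ^ (-(p/4) : ℝ)) :=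
          mul_le_mul_of_nonneg_left (by linarith) (by positivity)
  · rw [abs_of_nonpos (Real.log_nonpos hx.le h)]
    have hl : Real.log (x ^ (-(p/4) : ℝ)) ≤ x ^ (-(p/4) : ℝ) - 1 :=
      Real.log_le_sub_one_of_pos hx4'
    rw [Real.log_rpow hx] at hl
    have hstep : -Real.log x ≤ (4 / p) * (x ^ (-(p/4) : ℝ) - 1) := by
      have h5 := mul_le_mul_of_nonneg_left hl (show (0:ℝ) ≤ 4 / p by positivity)
      calc -Real.log x = (4 / p) * (-(p / 4) * Real.log x) := by field_simp
        _ ≤ (4 / p) * (x ^ (-(p/4) : ℝ) - 1) := h5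
    calc -Real.log x ≤ (4 / p) * (x ^ (-(p/4) : ℝ) - 1) := hstep
      _ ≤ (4 / p) * (x ^ (p/4 : ℝ) + x ^ (-(p/4) : ℝ)) :=
          mul_le_mul_of_nonneg_left (by linarith) (by positivity)

lemma F'_bound {p x q : ℝ} (hp0 : 0 < p) (hp1 : p ≤ 1) (hx : 0 < x) (hq : |q - p| < p / 2) :
    ‖x ^ q * Real.log x * halfGaussianPdf x‖ ≤
      (8 / p) * ((x ^ (p/4 : ℝ) + x ^ (3:ℝ)) * halfGaussianPdf x) := by
  have hq1 : p / 2 < q := by cases abs_lt.mp hq; linarith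
  have hq2 : q < 3 * p / 2 := by cases abs_lt.mp hq; linarith
  have hxq : (0:ℝ) < x ^ q := Real.rpow_pos_of_pos hx _
  have hf := hg_pos x
  rw [Real.norm_eq_abs, abs_mul, abs_mul, abs_of_nonneg hxq.le, abs_of_nonneg hf.le]
  have key : x ^ q * |Real.log x| ≤ (8 / p) * (x ^ (p/4 : ℝ) + x ^ (3:ℝ)) := by
    have h1 := abs_log_le hp0 hx
    have h2 : x ^ q * |Real.log x| ≤ x ^ q * ((4 / p) * (x ^ (p/4:ℝ) + x ^ (-(p/4):ℝ))) :=
      mul_le_mul_of_nonneg_left h1 hxq.le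
    have e1 : x ^ q * x ^ (p/4:ℝ) = x ^ (q + p/4) := (Real.rpow_add hx _ _).symm
    have e2 : x ^ q * x ^ (-(p/4):ℝ) = x ^ (q + -(p/4)) := (Real.rpow_add hx _ _).symm
    have b1 : x ^ (q + p/4) ≤ x ^ (p/4:ℝ) + x ^ (3:ℝ) :=
      rpow_le_sum hx (by linarith) (by linarith) (by linarith)
    have b2 : x ^ (q + -(p/4)) ≤ x ^ (p/4:ℝ) + x ^ (3:ℝ) :=
      rpow_le_sum hx (by linarith) (by linarith) (by linarith)
    calc x ^ q * |Real.log x| ≤ x ^ q * ((4 / p) * (x ^ (p/4:ℝ) + x ^ (-(p/4):ℝ))) := h2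
      _ = (4 / p) * (x ^ q * x ^ (p/4:ℝ) + x ^ q * x ^ (-(p/4):ℝ)) := by ring
      _ = (4 / p) * (x ^ (q + p/4) + x ^ (q + -(p/4))) := by rw [e1, e2]
      _ ≤ (4 / p) * ((x ^ (p/4:ℝ) + x ^ (3:ℝ)) + (x ^ (p/4:ℝ) + x ^ (3:ℝ))) := by
          apply mul_le_mul_of_nonneg_left (by linarith) (by positivity)
      _ = (8 / p) * (x ^ (p/4:ℝ) + x ^ (3:ℝ)) := by ring
  calc x ^ q * |Real.log x| * halfGaussianPdf x
      ≤ (8 / p) * (x ^ (p/4:ℝ) + x ^ (3:ℝ)) * halfGaussianPdf x :=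
        mul_le_mul_of_nonneg_right key hf.le
    _ = (8 / p) * ((x ^ (p/4:ℝ) + x ^ (3:ℝ)) * halfGaussianPdf x) := by ring
lemma param_deriv {p : ℝ} (hp0 : 0 < p) (hp1 : p ≤ 1) (S : Set ℝ) (hS : MeasurableSet S)
    (hsub : S ⊆ Ioi 0) :
    IntegrableOn (fun x => x ^ p * Real.log x * halfGaussianPdf x) S ∧
    HasDerivAt (fun q => ∫ x in S, x ^ q * halfGaussianPdf x)
      (∫ x in S, x ^ p * Real.log x * halfGaussianPdf x) p := by
  have hmeas : ∀ q : ℝ, AEStronglyMeasurable (fun x => x ^ q * halfGaussianPdf x)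
      (volume.restrict S) := by
    intro q
    apply ContinuousOn.aestronglyMeasurable _ hS
    intro x hx
    exact ((Real.continuousAt_rpow_const x q (Or.inl (hsub hx).ne')).mul
      hg_cont.continuousAt).continuousWithinAt
  have hmeas' : AEStronglyMeasurable (fun x => x ^ p * Real.log x * halfGaussianPdf x)
      (volume.restrict S) := by
    apply ContinuousOn.aestronglyMeasurable _ hS
    intro x hx
    exact (((Real.continuousAt_rpow_const x p (Or.inl (hsub hx).ne')).mul
      (Real.continuousAt_log (hsub hx).ne')).mul hg_cont.continuousAt).continuousWithinAt
  have hbound : IntegrableOn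
      (fun x => (8 / p) * ((x ^ (p/4 : ℝ) + x ^ (3:ℝ)) * halfGaussianPdf x)) S := by
    have hb1 : IntegrableOn (fun x : ℝ => x ^ (p/4:ℝ) * halfGaussianPdf x +
        x ^ (3:ℝ) * halfGaussianPdf x) (Ioi 0) :=
      (hg_integrableOn_rpow (by linarith : (-1:ℝ) < p/4)).add
        (hg_integrableOn_rpow (by norm_num : (-1:ℝ) < 3))
    have hb3 : IntegrableOn (fun x : ℝ => (8/p) * (x ^ (p/4:ℝ) * halfGaussianPdf x +
        x ^ (3:ℝ) * halfGaussianPdf x)) S := (hb1.mono_set hsub).const_mul (8/p)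
    refine hb3.congr_fun ?_ hS
    intro x _
    show (8/p) * (x ^ (p/4:ℝ) * halfGaussianPdf x + x ^ (3:ℝ) * halfGaussianPdf x) = _
    ring
  have key := hasDerivAt_integral_of_dominated_loc_of_deriv_le
    (μ := volume.restrict S) (x₀ := p) (s := Metric.ball p (p/2))
    (F := fun q x => x ^ q * halfGaussianPdf x)
    (F' := fun q x => x ^ q * Real.log x * halfGaussianPdf x)
    (bound := fun x => (8 / p) * ((x ^ (p/4 : ℝ) + x ^ (3:ℝ)) * halfGaussianPdf x))
    (Metric.ball_mem_nhds p (half_pos hp0))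
    (Eventually.of_forall hmeas)
    ((hg_integrableOn_rpow (by linarith : (-1:ℝ) < p)).mono_set hsub)
    hmeas'
    (((ae_restrict_iff' hS).mpr (Eventually.of_forall fun x hx => fun q hq =>
      F'_bound hp0 hp1 (hsub hx) (by simpa [Real.dist_eq] using hq))))
    hbound
    (((ae_restrict_iff' hS).mpr (Eventually.of_forall fun x hx => fun q _ =>
      (Real.hasStrictDerivAt_const_rpow (hsub hx) q).hasDerivAt.mul_const (halfGaussianPdf x))))
  exact key

lemma deriv_zero_of_left {Φ : ℝ → ℝ} {p D : ℝ} (hp : 0 < p)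
    (h : HasDerivAt Φ D p) (h0 : ∀ q ∈ Ioc (p/2) p, Φ q = 0) : D = 0 := by
  have h1 : Tendsto (slope Φ p) (𝓝[<] p) (𝓝 D) :=
    (hasDerivAt_iff_tendsto_slope.mp h).mono_left
      (nhdsWithin_mono _ (fun x hx => ne_of_lt hx))
  have h2 : slope Φ p =ᶠ[𝓝[<] p] fun _ => 0 := by
    filter_upwards [Ioo_mem_nhdsLT_of_mem
      (show p ∈ Ioc (p/2) p from ⟨by linarith, le_rfl⟩)] with q hq
    have hq0 : Φ q = 0 := h0 q ⟨hq.1, hq.2.le⟩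
    have hp0 : Φ p = 0 := h0 p ⟨by linarith, le_rfl⟩
    simp [slope_def_field, hq0, hp0]
  have h3 : Tendsto (slope Φ p) (𝓝[<] p) (𝓝 0) := by
    rw [tendsto_congr' h2]; exact tendsto_const_nhds
  exact tendsto_nhds_unique h1 h3
set_option maxHeartbeats 1000000 in
theorem stmt_10 (zstar : ℝ → ℝ) (p : ℝ) (hp : p ∈ Set.Ioc (0:ℝ) 1)
    (hzstar : ∀ q ∈ Set.Ioc (0:ℝ) 1, 0 < zstar q ∧
      ∫ x in (0:ℝ)..(zstar q), x ^ q * halfGaussianPdf x =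
        ∫ x in Set.Ioi (zstar q), x ^ q * halfGaussianPdf x)
    (hdiff : DifferentiableAt ℝ zstar p) :
    HasDerivAt (fun q => 1 - halfGaussianCdf (zstar q))
      (((∫ x in (0:ℝ)..(zstar p), x ^ p * Real.log x * halfGaussianPdf x) -
        ∫ x in Set.Ioi (zstar p), x ^ p * Real.log x * halfGaussianPdf x) /
        (2 * (zstar p) ^ p)) p ∧
    ((∫ x in (0:ℝ)..(zstar p), x ^ p * Real.log x * halfGaussianPdf x) -
        ∫ x in Set.Ioi (zstar p), x ^ p * Real.log x * halfGaussianPdf x) /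
        (2 * (zstar p) ^ p) < 0 := by
  obtain ⟨hp0, hp1⟩ := hp
  obtain ⟨hz0, heq⟩ := hzstar p ⟨hp0, hp1⟩
  have hzc : HasDerivAt zstar (deriv zstar p) p := hdiff.hasDerivAt
  set z := zstar p with hzdef
  set c := deriv zstar p with hcdef
  have hsub1 : Ioc (0:ℝ) z ⊆ Ioi 0 := fun x hx => hx.1
  have hsub2 : Ioi z ⊆ Ioi (0:ℝ) := fun x hx => lt_trans hz0 hx
  obtain ⟨hAint', hT⟩ := param_deriv hp0 hp1 (Ioi 0) measurableSet_Ioi (fun x hx => hx)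
  obtain ⟨hAint, hSfix⟩ := param_deriv hp0 hp1 (Ioc 0 z) measurableSet_Ioc hsub1
  set A := ∫ x in Ioc (0:ℝ) z, x ^ p * Real.log x * halfGaussianPdf x with hA
  set B := ∫ x in Ioi z, x ^ p * Real.log x * halfGaussianPdf x with hB
  have hBint : IntegrableOn (fun x => x ^ p * Real.log x * halfGaussianPdf x) (Ioi z) :=
    hAint'.mono_set hsub2
  have hAint2 : IntegrableOn (fun x => x ^ p * Real.log x * halfGaussianPdf x) (Ioc (0:ℝ) z) :=
    hAint
  have hsplitlog : (∫ x in Ioi (0:ℝ), x ^ p * Real.log x * halfGaussianPdf x) = A + B := by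
    rw [← Set.Ioc_union_Ioi_eq_Ioi hz0.le,
      setIntegral_union Set.Ioc_disjoint_Ioi_same measurableSet_Ioi hAint2 hBint]
  rw [hsplitlog] at hT
  -- local function definitions
  set G1 : ℝ → ℝ := fun y => ∫ t in (0:ℝ)..y, t ^ p * halfGaussianPdf t with hG1def
  set Smov : ℝ → ℝ := fun q => ∫ x in Ioc (0:ℝ) (zstar q), x ^ q * halfGaussianPdf x
    with hSmovdef
  set R : ℝ → ℝ := fun q => Smov q - (∫ x in Ioc (0:ℝ) z, x ^ q * halfGaussianPdf x) -
    (G1 (zstar q) - G1 z) with hRdef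
  have hcontp : Continuous (fun t : ℝ => t ^ p * halfGaussianPdf t) :=
    (continuous_iff_continuousAt.mpr fun x =>
      Real.continuousAt_rpow_const x p (Or.inr hp0.le)).mul hg_cont
  have hG1d : HasDerivAt (fun q => G1 (zstar q)) (z ^ p * halfGaussianPdf z * c) p := by
    rw [hG1def]
    exact ((hcontp.integral_hasStrictDerivAt 0 z).hasDerivAt).comp p hzc
  -- the little-o remainder term
  obtain ⟨M, hM1, hMb⟩ : ∃ M : ℝ, 1 ≤ M ∧ ∀ t ∈ Icc (z/2) (2*z), |Real.log t| ≤ M := by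
    refine ⟨|Real.log (z/2)| + |Real.log (2*z)| + 1,
      by linarith [abs_nonneg (Real.log (z/2)), abs_nonneg (Real.log (2*z))], ?_⟩
    intro t ht
    have h1 : Real.log (z/2) ≤ Real.log t := Real.log_le_log (by linarith) ht.1
    have h2 : Real.log t ≤ Real.log (2*z) :=
      Real.log_le_log (lt_of_lt_of_le (by linarith) ht.1) ht.2
    rw [abs_le]
    constructor
    · linarith [neg_abs_le (Real.log (z/2)), abs_nonneg (Real.log (2*z))]
    · linarith [le_abs_self (Real.log (2*z)), abs_nonneg (Real.log (z/2))]
  obtain ⟨C, hC⟩ := Asymptotics.isBigO_iff.mp hdiff.isBigO_sub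
  have hev : ∀ᶠ q in 𝓝 p, zstar q ∈ Ioo (z/2) (2*z) ∧ ‖zstar q - z‖ ≤ C * ‖q - p‖ ∧
      |q - p| * M ≤ 1 ∧ |q - p| < p/2 := by
    have hMpos : (0:ℝ) < 1/M := by positivity
    filter_upwards [hzc.continuousAt.preimage_mem_nhds
        (isOpen_Ioo.mem_nhds (show z ∈ Ioo (z/2) (2*z) by constructor <;> linarith)),
      hC, Metric.ball_mem_nhds p (show (0:ℝ) < min (1/M) (p/2) by positivity)]
      with q h1 h2 h3
    refine ⟨h1, h2, ?_, ?_⟩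
    · have h4 : dist q p < 1/M := lt_of_lt_of_le (Metric.mem_ball.mp h3) (min_le_left _ _)
      rw [Real.dist_eq] at h4
      have hM0 : (0:ℝ) < M := by linarith
      have h5 : |q - p| * M ≤ (1/M) * M := mul_le_mul_of_nonneg_right h4.le hM0.le
      rw [one_div, inv_mul_cancel₀ hM0.ne'] at h5
      exact h5
    · have h4 := lt_of_lt_of_le (Metric.mem_ball.mp h3) (min_le_right _ _)
      rwa [Real.dist_eq] at h4
  have hRbound : ∀ᶠ q in 𝓝 p, ‖R q‖ ≤ ((2*z)^p * (2*M) * C) * ‖(q - p) * (q - p)‖ := by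
    filter_upwards [hev] with q hq
    obtain ⟨hzq, hlin, hsmall, hqp⟩ := hq
    have hzq1 : z/2 < zstar q := hzq.1
    have hzq2 : zstar q < 2*z := hzq.2
    have hzq0 : 0 < zstar q := by linarith
    have hq0 : 0 < q := by
      rcases abs_lt.mp hqp with ⟨h5, _⟩; linarith
    have huicc : Set.uIcc z (zstar q) ⊆ Set.uIcc 0 (2*z) := by
      rw [Set.uIcc_of_le (by linarith : (0:ℝ) ≤ 2*z)]
      exact Set.uIcc_subset_Icc ⟨hz0.le, by linarith⟩ ⟨hzq0.le, hzq2.le⟩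
    have i02q : IntervalIntegrable (fun t => t ^ q * halfGaussianPdf t) volume 0 (2*z) := by
      rw [intervalIntegrable_iff_integrableOn_Ioc_of_le (by linarith : (0:ℝ) ≤ 2*z)]
      exact (hg_integrableOn_rpow (by linarith : (-1:ℝ) < q)).mono_set (fun x hx => hx.1)
    have i0q : IntervalIntegrable (fun t => t ^ q * halfGaussianPdf t) volume 0 (zstar q) := by
      rw [intervalIntegrable_iff_integrableOn_Ioc_of_le hzq0.le]
      exact (hg_integrableOn_rpow (by linarith : (-1:ℝ) < q)).mono_set (fun x hx => hx.1)
    have i0z : IntervalIntegrable (fun t => t ^ q * halfGaussianPdf t) volume 0 z := by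
      rw [intervalIntegrable_iff_integrableOn_Ioc_of_le hz0.le]
      exact (hg_integrableOn_rpow (by linarith : (-1:ℝ) < q)).mono_set (fun x hx => hx.1)
    have izq : IntervalIntegrable (fun t => t ^ q * halfGaussianPdf t) volume z (zstar q) :=
      i02q.mono_set huicc
    have izp : IntervalIntegrable (fun t => t ^ p * halfGaussianPdf t) volume z (zstar q) :=
      hcontp.intervalIntegrable _ _
    have e1 : Smov q - (∫ x in Ioc (0:ℝ) z, x ^ q * halfGaussianPdf x) =
        ∫ t in z..(zstar q), t ^ q * halfGaussianPdf t := by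
      simp only [hSmovdef]
      rw [← intervalIntegral.integral_of_le hzq0.le, ← intervalIntegral.integral_of_le hz0.le]
      exact intervalIntegral.integral_interval_sub_left i0q i0z
    have e2 : G1 (zstar q) - G1 z = ∫ t in z..(zstar q), t ^ p * halfGaussianPdf t := by
      simp only [hG1def]
      exact intervalIntegral.integral_interval_sub_left (hcontp.intervalIntegrable 0 (zstar q))
        (hcontp.intervalIntegrable 0 z)
    have hRq : R q = ∫ t in z..(zstar q),
        (t ^ q * halfGaussianPdf t - t ^ p * halfGaussianPdf t) := by
      simp only [hRdef]
      rw [e1, e2, intervalIntegral.integral_sub izq izp]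
    rw [hRq]
    have hbd : ∀ t ∈ Set.uIoc z (zstar q),
        ‖t ^ q * halfGaussianPdf t - t ^ p * halfGaussianPdf t‖ ≤
          (2*z)^p * (2*M) * |q - p| := by
      intro t ht
      have hmin : z/2 ≤ min z (zstar q) := le_min (by linarith) (by linarith)
      have hmax : max z (zstar q) ≤ 2*z := max_le (by linarith) (by linarith)
      have ht1 : z/2 < t := lt_of_le_of_lt hmin ht.1
      have ht2 : t ≤ 2*z := le_trans ht.2 hmax
      have ht0 : 0 < t := by linarith
      have hlogt : |Real.log t| ≤ M := hMb t ⟨ht1.le, ht2⟩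
      have hsplit : t ^ q = t ^ p * Real.exp (Real.log t * (q - p)) := by
        rw [← Real.rpow_def_of_pos ht0, ← Real.rpow_add ht0]
        ring_nf
      have habs : |Real.log t * (q - p)| ≤ 1 := by
        rw [abs_mul]
        calc |Real.log t| * |q - p| ≤ M * |q - p| :=
              mul_le_mul_of_nonneg_right hlogt (abs_nonneg _)
          _ = |q - p| * M := by ring
          _ ≤ 1 := hsmall
      have hexp : |Real.exp (Real.log t * (q - p)) - 1| ≤ 2 * |Real.log t * (q - p)| :=
        Real.abs_exp_sub_one_le habs
      have htp : (0:ℝ) < t ^ p := Real.rpow_pos_of_pos ht0 p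
      have htple : t ^ p ≤ (2*z) ^ p := Real.rpow_le_rpow ht0.le ht2 hp0.le
      have hfle := hg_le_one t
      have hfpos := hg_pos t
      have key : |t ^ q - t ^ p| ≤ (2*z)^p * (2*M) * |q - p| := by
        rw [hsplit, show t ^ p * Real.exp (Real.log t * (q - p)) - t ^ p =
          t ^ p * (Real.exp (Real.log t * (q - p)) - 1) by ring, abs_mul,
          abs_of_nonneg htp.le]
        have h6 : |Real.exp (Real.log t * (q - p)) - 1| ≤ 2 * (M * |q - p|) := by
          rw [abs_mul] at hexp
          nlinarith [abs_nonneg (q - p), abs_nonneg (Real.log t)]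
        calc t ^ p * |Real.exp (Real.log t * (q - p)) - 1| ≤ t ^ p * (2 * (M * |q - p|)) :=
              mul_le_mul_of_nonneg_left h6 htp.le
          _ ≤ (2*z)^p * (2 * (M * |q - p|)) := by
              apply mul_le_mul_of_nonneg_right htple
              positivity
          _ = (2*z)^p * (2*M) * |q - p| := by ring
      calc ‖t ^ q * halfGaussianPdf t - t ^ p * halfGaussianPdf t‖
          = |t ^ q - t ^ p| * halfGaussianPdf t := by
            rw [Real.norm_eq_abs, show t ^ q * halfGaussianPdf t - t ^ p * halfGaussianPdf t =
              (t ^ q - t ^ p) * halfGaussianPdf t by ring, abs_mul, abs_of_nonneg hfpos.le]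
        _ ≤ |t ^ q - t ^ p| * 1 := mul_le_mul_of_nonneg_left hfle (abs_nonneg _)
        _ = |t ^ q - t ^ p| := mul_one _
        _ ≤ (2*z)^p * (2*M) * |q - p| := key
    have h7 := intervalIntegral.norm_integral_le_of_norm_le_const hbd
    have h8 : |zstar q - z| ≤ C * |q - p| := by
      rwa [Real.norm_eq_abs, Real.norm_eq_abs] at hlin
    rw [show ‖(q - p) * (q - p)‖ = |q - p| * |q - p| from by
      rw [Real.norm_eq_abs, abs_mul]]
    calc ‖∫ t in z..(zstar q), (t ^ q * halfGaussianPdf t - t ^ p * halfGaussianPdf t)‖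
        ≤ (2*z)^p * (2*M) * |q - p| * |zstar q - z| := h7
      _ ≤ (2*z)^p * (2*M) * |q - p| * (C * |q - p|) := by
          apply mul_le_mul_of_nonneg_left h8
          positivity
      _ = (2*z)^p * (2*M) * C * (|q - p| * |q - p|) := by ring
  have hR0 : R p = 0 := by
    simp only [hRdef, hSmovdef, hG1def, ← hzdef, sub_self]
  have hRd : HasDerivAt R 0 p := by
    rw [hasDerivAt_iff_isLittleO]
    simp only [hR0, smul_zero, sub_zero]
    have hlo : (fun q : ℝ => (q - p) * (q - p)) =o[𝓝 p] fun q => q - p := by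
      have h1 : (fun q : ℝ => q - p) =o[𝓝 p] (fun _ => (1:ℝ)) := by
        rw [Asymptotics.isLittleO_one_iff]
        have h2 : Tendsto (fun q : ℝ => q - p) (𝓝 p) (𝓝 (p - p)) :=
          (continuous_id.sub continuous_const).tendsto p
        simpa using h2
      simpa using h1.mul_isBigO (Asymptotics.isBigO_refl (fun q : ℝ => q - p) (𝓝 p))
    exact (Asymptotics.IsBigO.of_bound _ hRbound).trans_isLittleO hlo
  have hSmovd : HasDerivAt Smov (A + z ^ p * halfGaussianPdf z * c) p := by
    have h := (hSfix.add (hG1d.sub_const (G1 z))).add hRd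
    have hfun : ∀ q, Smov q = ((∫ x in Ioc (0:ℝ) z, x ^ q * halfGaussianPdf x) +
        (G1 (zstar q) - G1 z)) + R q := by
      intro q
      simp only [hRdef]
      ring
    have h2 := h.congr_of_eventuallyEq (Eventually.of_forall hfun)
    rw [add_zero] at h2
    exact h2
  have hΦ : HasDerivAt (fun q => 2 * Smov q - ∫ x in Ioi (0:ℝ), x ^ q * halfGaussianPdf x)
      (2 * (A + z ^ p * halfGaussianPdf z * c) - (A + B)) p := (hSmovd.const_mul 2).sub hT
  have hvanish : ∀ q ∈ Ioc (p/2) p,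
      2 * Smov q - (∫ x in Ioi (0:ℝ), x ^ q * halfGaussianPdf x) = 0 := by
    intro q hq
    have hq01 : q ∈ Set.Ioc (0:ℝ) 1 := ⟨by linarith [hq.1], le_trans hq.2 hp1⟩
    obtain ⟨hzq0, heqq⟩ := hzstar q hq01
    have hint1 : IntegrableOn (fun x => x ^ q * halfGaussianPdf x) (Ioc 0 (zstar q)) :=
      (hg_integrableOn_rpow (by linarith [hq01.1] : (-1:ℝ) < q)).mono_set (fun x hx => hx.1)
    have hint2 : IntegrableOn (fun x => x ^ q * halfGaussianPdf x) (Ioi (zstar q)) :=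
      (hg_integrableOn_rpow (by linarith [hq01.1] : (-1:ℝ) < q)).mono_set
        (fun x hx => lt_trans hzq0 hx)
    have hsplit : (∫ x in Ioi (0:ℝ), x ^ q * halfGaussianPdf x) =
        (∫ x in Ioc (0:ℝ) (zstar q), x ^ q * halfGaussianPdf x) +
          ∫ x in Ioi (zstar q), x ^ q * halfGaussianPdf x := by
      rw [← Set.Ioc_union_Ioi_eq_Ioi hzq0.le,
        setIntegral_union Set.Ioc_disjoint_Ioi_same measurableSet_Ioi hint1 hint2]
    have hSq : Smov q = ∫ x in Ioi (zstar q), x ^ q * halfGaussianPdf x := by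
      simp only [hSmovdef]
      rw [← intervalIntegral.integral_of_le hzq0.le]
      exact heqq
    rw [hsplit, hSq, ← intervalIntegral.integral_of_le hzq0.le, ← heqq]
    ring
  have hD0 := deriv_zero_of_left hp0 hΦ hvanish
  have hF : HasDerivAt halfGaussianCdf (halfGaussianPdf z) z :=
    (hg_cont.integral_hasStrictDerivAt 0 z).hasDerivAt
  have hmain : HasDerivAt (fun q => 1 - halfGaussianCdf (zstar q))
      (-(halfGaussianPdf z * c)) p := (hF.comp p hzc).const_sub 1
  have hzp : (0:ℝ) < z ^ p := Real.rpow_pos_of_pos hz0 p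
  have hAi : (∫ x in (0:ℝ)..z, x ^ p * Real.log x * halfGaussianPdf x) = A :=
    intervalIntegral.integral_of_le hz0.le
  have hveq : (A - B) / (2 * z ^ p) = -(halfGaussianPdf z * c) := by
    have h9 : A - B = -(2 * (z ^ p * halfGaussianPdf z * c)) := by linarith
    rw [h9]
    field_simp
  constructor
  · rw [hAi, hveq]
    exact hmain
  · rw [hAi]
    apply div_neg_of_neg_of_pos _ (by positivity)
    -- A - B < 0
    have hm_int : IntegrableOn (fun x => x ^ p * halfGaussianPdf x) (Ioc (0:ℝ) z) :=
      (hg_integrableOn_rpow (by linarith : (-1:ℝ) < p)).mono_set hsub1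
    have hm'_int : IntegrableOn (fun x => x ^ p * halfGaussianPdf x) (Ioi z) :=
      (hg_integrableOn_rpow (by linarith : (-1:ℝ) < p)).mono_set hsub2
    have hmeq : (∫ x in Ioi z, x ^ p * halfGaussianPdf x) =
        ∫ x in Ioc (0:ℝ) z, x ^ p * halfGaussianPdf x := by
      rw [← heq, intervalIntegral.integral_of_le hz0.le]
    have hA_le : A ≤ Real.log z * ∫ x in Ioc (0:ℝ) z, x ^ p * halfGaussianPdf x := by
      have h0 : 0 ≤ ∫ x in Ioc (0:ℝ) z, (Real.log z * (x ^ p * halfGaussianPdf x) -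
          x ^ p * Real.log x * halfGaussianPdf x) := by
        apply setIntegral_nonneg measurableSet_Ioc
        intro x hx
        have hx0 : 0 < x := hx.1
        have hlog : Real.log x ≤ Real.log z := Real.log_le_log hx0 hx.2
        have hxp : (0:ℝ) ≤ x ^ p := (Real.rpow_pos_of_pos hx0 p).le
        nlinarith [mul_nonneg (sub_nonneg.mpr hlog) (mul_nonneg hxp (hg_pos x).le)]
      rw [integral_sub (hm_int.const_mul _) hAint2, integral_const_mul] at h0
      linarith
    have hB_gt : Real.log z * (∫ x in Ioc (0:ℝ) z, x ^ p * halfGaussianPdf x) < B := by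
      have hpos : 0 < ∫ x in Ioi z, (x ^ p * Real.log x * halfGaussianPdf x -
          Real.log z * (x ^ p * halfGaussianPdf x)) := by
        have hfi : IntegrableOn (fun x => x ^ p * Real.log x * halfGaussianPdf x -
            Real.log z * (x ^ p * halfGaussianPdf x)) (Ioi z) :=
          hBint.sub (hm'_int.const_mul _)
        refine (setIntegral_pos_iff_support_of_nonneg_ae ?_ hfi).mpr ?_
        · refine (ae_restrict_iff' measurableSet_Ioi).mpr (Eventually.of_forall fun x hx => ?_)
          have hxz : z < x := hx
          have hlog : Real.log z ≤ Real.log x := (Real.log_lt_log hz0 hxz).le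
          have hxp : (0:ℝ) ≤ x ^ p := (Real.rpow_pos_of_pos (lt_trans hz0 hxz) p).le
          have h10 := hg_pos x
          simp only [Pi.zero_apply]
          nlinarith [mul_nonneg (sub_nonneg.mpr hlog) (mul_nonneg hxp h10.le)]
        · have hsup : Ioi z ⊆ Function.support (fun x => x ^ p * Real.log x * halfGaussianPdf x -
              Real.log z * (x ^ p * halfGaussianPdf x)) := by
            intro x hx
            have hxz : z < x := hx
            have hlog : Real.log z < Real.log x := Real.log_lt_log hz0 hxz
            have hxp : (0:ℝ) < x ^ p := Real.rpow_pos_of_pos (lt_trans hz0 hxz) p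
            simp only [Function.mem_support]
            have h10 := hg_pos x
            nlinarith [mul_pos (sub_pos.mpr hlog) (mul_pos hxp h10)]
          rw [Set.inter_eq_right.mpr hsup, Real.volume_Ioi]
          simp
      rw [integral_sub hBint (hm'_int.const_mul _), integral_const_mul, hmeq] at hpos
      linarith
    linarith
end

section
/- Let 0 < p ≤ 1, γ ∈ (0, (1/2)^{1/p}), ε > 0, and let A be an m×n real matrix. Suppose K is a γ-net of the unit sphere of ℝ^n such that for every v ∈ K: (a) the sum of the ⌈ρm⌉ largest values of |(Av)_i|^p is at most (1/2 − δ)S, and (b) (1−ε)S ≤ ∑_i |(Av)_i|^p ≤ (1+ε)S, where S > 0 and δ > 0 are constants. Then for every z ∈ ℝ^n and every T with |T| ≤ ρm: ∑_{i∈T^c} |(Az)_i|^p − ∑_{i∈T} |(Az)_i|^p ≥ S ‖z‖_2^p (2δ − 2γ^p − ε)/(1 − γ^p). -/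
private lemma rpow_subadd_aux {p : ℝ} (hp0 : 0 < p) (hp1 : p ≤ 1) (a b : ℝ) :
    |a + b| ^ p ≤ |a| ^ p + |b| ^ p := by
  have h1 : |a + b| ^ p ≤ (|a| + |b|) ^ p :=
    Real.rpow_le_rpow (abs_nonneg _) (abs_add_le a b) hp0.le
  refine h1.trans ?_
  have h := NNReal.coe_le_coe.2
    (NNReal.rpow_add_le_add_rpow ⟨|a|, abs_nonneg a⟩ ⟨|b|, abs_nonneg b⟩ hp0.le hp1)
  simp only [NNReal.coe_rpow, NNReal.coe_add] at h
  exact h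

theorem stmt_16 (m n : ℕ) (A : Matrix (Fin m) (Fin n) ℝ) (p γ ε ρ δ S : ℝ)
    (hp0 : 0 < p) (hp1 : p ≤ 1) (hγ0 : 0 < γ) (hγ : γ < (1/2 : ℝ) ^ (1/p : ℝ))
    (hε : 0 < ε) (hρ0 : 0 < ρ) (hρ1 : ρ ≤ 1) (hδ : 0 < δ) (hS : 0 < S)
    (K : Set (EuclideanSpace ℝ (Fin n)))
    (hKsphere : ∀ v ∈ K, ‖v‖ = 1)
    (hKnet : ∀ z : EuclideanSpace ℝ (Fin n), ‖z‖ = 1 → ∃ v ∈ K, ‖z - v‖ ≤ γ)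
    (ha : ∀ v ∈ K, ∀ T : Finset (Fin m), T.card ≤ ⌈ρ * m⌉₊ →
      ∑ i ∈ T, |A.mulVec (fun j => v j) i| ^ p ≤ (1/2 - δ) * S)
    (hb : ∀ v ∈ K, (1 - ε) * S ≤ ∑ i, |A.mulVec (fun j => v j) i| ^ p ∧
      ∑ i, |A.mulVec (fun j => v j) i| ^ p ≤ (1 + ε) * S) :
    ∀ z : EuclideanSpace ℝ (Fin n), ∀ T : Finset (Fin m), (T.card : ℝ) ≤ ρ * m →
      ∑ i ∈ Tᶜ, |A.mulVec (fun j => z j) i| ^ p - ∑ i ∈ T, |A.mulVec (fun j => z j) i| ^ p ≥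
        S * ‖z‖ ^ p * (2 * δ - 2 * γ ^ p - ε) / (1 - γ ^ p) := by
  -- basic facts about γ ^ p
  have hqpos : 0 < γ ^ p := Real.rpow_pos_of_pos hγ0 p
  have hqhalf : γ ^ p < 1/2 := by
    calc γ ^ p < ((1/2 : ℝ) ^ (1/p : ℝ)) ^ p := Real.rpow_lt_rpow hγ0.le hγ hp0
      _ = (1/2 : ℝ) ^ ((1/p) * p) := (Real.rpow_mul (by norm_num) _ _).symm
      _ = 1/2 := by rw [one_div_mul_cancel hp0.ne', Real.rpow_one]
  have hden : 0 < 1 - γ ^ p := by linarith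
  -- abbreviation for the summand function
  set F : EuclideanSpace ℝ (Fin n) → Fin m → ℝ :=
    fun w i => |A.mulVec (fun j => w j) i| ^ p with hF
  have hFnonneg : ∀ w i, 0 ≤ F w i := fun w i => Real.rpow_nonneg (abs_nonneg _) p
  -- scaling
  have hscale : ∀ (c : ℝ) (w : EuclideanSpace ℝ (Fin n)) (i : Fin m),
      F (c • w) i = |c| ^ p * F w i := by
    intro c w i
    have h2 : A.mulVec (fun j => (c • w) j) i = c * A.mulVec (fun j => w j) i := by
      have h1 : (fun j => (c • w) j) = c • (fun j => w j) := rfl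
      rw [h1, Matrix.mulVec_smul]
      rfl
    show |A.mulVec (fun j => (c • w) j) i| ^ p = |c| ^ p * |A.mulVec (fun j => w j) i| ^ p
    rw [h2, abs_mul, Real.mul_rpow (abs_nonneg _) (abs_nonneg _)]
  -- subadditivity
  have haddF : ∀ (w w' : EuclideanSpace ℝ (Fin n)) (i : Fin m),
      F (w + w') i ≤ F w i + F w' i := by
    intro w w' i
    have h2 : A.mulVec (fun j => (w + w') j) i =
        A.mulVec (fun j => w j) i + A.mulVec (fun j => w' j) i := by
      have h1 : (fun j => (w + w') j) = (fun j => w j) + (fun j => w' j) := rfl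
      rw [h1, Matrix.mulVec_add]
      rfl
    show |A.mulVec (fun j => (w + w') j) i| ^ p ≤
      |A.mulVec (fun j => w j) i| ^ p + |A.mulVec (fun j => w' j) i| ^ p
    rw [h2]
    exact rpow_subadd_aux hp0 hp1 _ _
  have hFzero : ∀ i, F (0 : EuclideanSpace ℝ (Fin n)) i = 0 := by
    intro i
    have h1 : (fun j => (0 : EuclideanSpace ℝ (Fin n)) j) = (0 : Fin n → ℝ) := rfl
    show |A.mulVec (fun j => (0 : EuclideanSpace ℝ (Fin n)) j) i| ^ p = 0
    rw [h1, Matrix.mulVec_zero]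
    simp [Real.zero_rpow hp0.ne']
  intro z T hT
  have hTk : T.card ≤ ⌈ρ * m⌉₊ := by
    have : (T.card : ℝ) ≤ (⌈ρ * m⌉₊ : ℝ) := hT.trans (Nat.le_ceil _)
    exact_mod_cast this
  -- trivial case n = 0
  rcases Nat.eq_zero_or_pos n with hn | hn
  · subst hn
    have hz0 : ∀ i, F z i = 0 := by
      intro i
      have h1 : (fun j => z j) = (0 : Fin 0 → ℝ) := funext fun j => j.elim0
      show |A.mulVec (fun j => z j) i| ^ p = 0
      rw [h1, Matrix.mulVec_zero]
      simp [Real.zero_rpow hp0.ne']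
    have hznorm : ‖z‖ = 0 := by
      simp [EuclideanSpace.norm_eq]
    rw [Finset.sum_congr rfl (fun i _ => hz0 i), Finset.sum_congr rfl (fun i _ => hz0 i),
      hznorm, Real.zero_rpow hp0.ne']
    simp
  -- now n > 0 : there is a unit vector
  have hunit : ∃ e : EuclideanSpace ℝ (Fin n), ‖e‖ = 1 := by
    refine ⟨EuclideanSpace.single (⟨0, hn⟩ : Fin n) (1 : ℝ), ?_⟩
    rw [EuclideanSpace.norm_single]; norm_num
  obtain ⟨e, he⟩ := hunit
  -- coordinate bound
  have hcoord : ∀ (w : EuclideanSpace ℝ (Fin n)) (j : Fin n), |w j| ≤ ‖w‖ := by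
    intro w j
    rw [EuclideanSpace.norm_eq]
    have h1 : |w j| = Real.sqrt (‖w j‖ ^ 2) := by
      rw [Real.sqrt_sq_eq_abs]; simp [Real.norm_eq_abs]
    rw [h1]
    exact Real.sqrt_le_sqrt (Finset.single_le_sum (f := fun i => ‖w i‖ ^ 2)
      (fun i _ => sq_nonneg _) (Finset.mem_univ j))
  -- global crude bound
  set C : ℝ := ∑ i : Fin m, (∑ j : Fin n, |A i j|) ^ p with hCdef
  have hCbound : ∀ (w : EuclideanSpace ℝ (Fin n)), ‖w‖ = 1 →
      ∀ T' : Finset (Fin m), ∑ i ∈ T', F w i ≤ C := by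
    intro w hw T'
    have hterm : ∀ i : Fin m, F w i ≤ (∑ j : Fin n, |A i j|) ^ p := by
      intro i
      refine Real.rpow_le_rpow (abs_nonneg _) ?_ hp0.le
      calc |A.mulVec (fun j => w j) i| = |∑ j, A i j * w j| := rfl
        _ ≤ ∑ j, |A i j * w j| := Finset.abs_sum_le_sum_abs _ _
        _ ≤ ∑ j, |A i j| := by
            refine Finset.sum_le_sum fun j _ => ?_
            rw [abs_mul]
            calc |A i j| * |w j| ≤ |A i j| * 1 := by
                  refine mul_le_mul_of_nonneg_left ?_ (abs_nonneg _)
                  rw [← hw]; exact hcoord w j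
              _ = |A i j| := mul_one _
    calc ∑ i ∈ T', F w i ≤ ∑ i ∈ T', (∑ j : Fin n, |A i j|) ^ p :=
          Finset.sum_le_sum fun i _ => hterm i
      _ ≤ C := Finset.sum_le_sum_of_subset_of_nonneg (Finset.subset_univ T')
          (fun i _ _ => Real.rpow_nonneg (Finset.sum_nonneg fun j _ => abs_nonneg _) p)
  -- the two suprema
  set MS : Set ℝ := {x | ∃ w : EuclideanSpace ℝ (Fin n), ∃ T' : Finset (Fin m),
    ‖w‖ = 1 ∧ T'.card ≤ ⌈ρ * m⌉₊ ∧ x = ∑ i ∈ T', F w i} with hMSdef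
  set NS : Set ℝ := {x | ∃ w : EuclideanSpace ℝ (Fin n), ‖w‖ = 1 ∧ x = ∑ i, F w i} with hNSdef
  have hMSne : MS.Nonempty := ⟨0, e, ∅, he, by simp, by simp⟩
  have hNSne : NS.Nonempty := ⟨∑ i, F e i, e, he, rfl⟩
  have hMSbdd : BddAbove MS := by
    refine ⟨C, fun x hx => ?_⟩
    obtain ⟨w, T', hw, _, rfl⟩ := hx
    exact hCbound w hw T'
  have hNSbdd : BddAbove NS := by
    refine ⟨C, fun x hx => ?_⟩
    obtain ⟨w, hw, rfl⟩ := hx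
    exact hCbound w hw Finset.univ
  set M : ℝ := sSup MS with hMdef
  set N : ℝ := sSup NS with hNdef
  have hM0 : 0 ≤ M := le_csSup hMSbdd ⟨e, ∅, he, by simp, by simp⟩
  have hN0 : 0 ≤ N := by
    have h1 : (∑ i, F e i) ∈ NS := ⟨e, he, rfl⟩
    have h2 : 0 ≤ ∑ i, F e i := Finset.sum_nonneg fun i _ => hFnonneg e i
    exact h2.trans (le_csSup hNSbdd h1)
  -- decomposition of a unit vector via the net
  have hdecomp : ∀ w : EuclideanSpace ℝ (Fin n), ‖w‖ = 1 →
      ∃ v ∈ K,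
        (∀ T' : Finset (Fin m), T'.card ≤ ⌈ρ * m⌉₊ →
          ∑ i ∈ T', F w i ≤ ∑ i ∈ T', F v i + γ ^ p * M) ∧
        (∑ i, F w i ≤ ∑ i, F v i + γ ^ p * N) ∧
        (∑ i, F v i ≤ ∑ i, F w i + γ ^ p * N) := by
    intro w hw
    obtain ⟨v, hvK, hvw⟩ := hKnet w hw
    refine ⟨v, hvK, ?_⟩
    set r : EuclideanSpace ℝ (Fin n) := w - v with hrdef
    have hw_eq : w = v + r := by rw [hrdef]; abel
    have hv_eq : v = w + (-r) := by rw [hrdef]; abel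
    have hrγ : ‖r‖ ≤ γ := hvw
    have hFrnegeq : ∀ i, F (-r) i = F r i := by
      intro i
      have h : F (-r) i = F ((-1 : ℝ) • r) i := by norm_num
      rw [h, hscale]
      simp
    have hsum1 : ∀ T' : Finset (Fin m),
        ∑ i ∈ T', F w i ≤ ∑ i ∈ T', F v i + ∑ i ∈ T', F r i := by
      intro T'
      rw [← Finset.sum_add_distrib]
      refine Finset.sum_le_sum fun i _ => ?_
      calc F w i = F (v + r) i := by rw [← hw_eq]
        _ ≤ F v i + F r i := haddF v r i
    have hsum2 : ∑ i, F v i ≤ ∑ i, F w i + ∑ i, F r i := by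
      rw [← Finset.sum_add_distrib]
      refine Finset.sum_le_sum fun i _ => ?_
      calc F v i = F (w + (-r)) i := by rw [← hv_eq]
        _ ≤ F w i + F (-r) i := haddF w (-r) i
        _ = F w i + F r i := by rw [hFrnegeq]
    by_cases hr : r = (0 : EuclideanSpace ℝ (Fin n))
    · have hr0 : ∀ i, F r i = 0 := by rw [hr]; exact hFzero
      have hMnn : 0 ≤ γ ^ p * M := mul_nonneg hqpos.le hM0
      have hNnn : 0 ≤ γ ^ p * N := mul_nonneg hqpos.le hN0
      refine ⟨fun T' _ => ?_, ?_, ?_⟩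
      · have := hsum1 T'
        rw [Finset.sum_congr rfl (fun i _ => hr0 i), Finset.sum_const, smul_zero] at this
        linarith
      · have := hsum1 Finset.univ
        rw [Finset.sum_congr rfl (fun i _ => hr0 i), Finset.sum_const, smul_zero] at this
        linarith
      · have := hsum2
        rw [Finset.sum_congr rfl (fun i _ => hr0 i), Finset.sum_const, smul_zero] at this
        linarith
    · set u : EuclideanSpace ℝ (Fin n) := ‖r‖⁻¹ • r with hudef
      have hu : ‖u‖ = 1 := norm_smul_inv_norm hr
      have hru : r = ‖r‖ • u := by
        rw [hudef, smul_smul, mul_inv_cancel₀ (norm_ne_zero_iff.2 hr), one_smul]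
      have hFr : ∀ i, F r i = ‖r‖ ^ p * F u i := by
        intro i
        have h := hscale ‖r‖ u i
        rw [← hru] at h
        rw [h, abs_of_nonneg (norm_nonneg r)]
      have hrpow : ‖r‖ ^ p ≤ γ ^ p := Real.rpow_le_rpow (norm_nonneg r) hrγ hp0.le
      have hsum_r_bound : ∀ T'' : Finset (Fin m), T''.card ≤ ⌈ρ * m⌉₊ →
          ∑ i ∈ T'', F r i ≤ γ ^ p * M := by
        intro T'' hT''
        have h1 : ∑ i ∈ T'', F r i = ‖r‖ ^ p * ∑ i ∈ T'', F u i := by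
          rw [Finset.mul_sum]; exact Finset.sum_congr rfl fun i _ => hFr i
        have h2 : ∑ i ∈ T'', F u i ≤ M :=
          le_csSup hMSbdd ⟨u, T'', hu, hT'', rfl⟩
        have h3 : 0 ≤ ∑ i ∈ T'', F u i := Finset.sum_nonneg fun i _ => hFnonneg u i
        rw [h1]
        exact mul_le_mul hrpow h2 h3 hqpos.le
      have hsum_r_univ : ∑ i, F r i ≤ γ ^ p * N := by
        have h1 : ∑ i, F r i = ‖r‖ ^ p * ∑ i, F u i := by
          rw [Finset.mul_sum]; exact Finset.sum_congr rfl fun i _ => hFr i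
        have h2 : ∑ i, F u i ≤ N := le_csSup hNSbdd ⟨u, hu, rfl⟩
        have h3 : 0 ≤ ∑ i, F u i := Finset.sum_nonneg fun i _ => hFnonneg u i
        rw [h1]
        exact mul_le_mul hrpow h2 h3 hqpos.le
      exact ⟨fun T' hT' => (hsum1 T').trans (by linarith [hsum_r_bound T' hT']),
        (hsum1 Finset.univ).trans (by linarith [hsum_r_univ]),
        hsum2.trans (by linarith [hsum_r_univ])⟩
  -- recursive bounds on M and N
  have hMrec : M ≤ (1/2 - δ) * S + γ ^ p * M := by
    refine csSup_le hMSne ?_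
    rintro x ⟨w, T', hw, hT', rfl⟩
    obtain ⟨v, hvK, h1, _, _⟩ := hdecomp w hw
    have h2 := ha v hvK T' hT'
    linarith [h1 T' hT']
  have hNrec : N ≤ (1 + ε) * S + γ ^ p * N := by
    refine csSup_le hNSne ?_
    rintro x ⟨w, hw, rfl⟩
    obtain ⟨v, hvK, _, h1, _⟩ := hdecomp w hw
    have h2 := (hb v hvK).2
    linarith
  have hMle : M ≤ (1/2 - δ) * S / (1 - γ ^ p) := by
    rw [le_div_iff₀ hden]
    nlinarith [hMrec]
  have hNle : N ≤ (1 + ε) * S / (1 - γ ^ p) := by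
    rw [le_div_iff₀ hden]
    nlinarith [hNrec]
  -- lower bound on the full sum for unit vectors
  have hlow : ∀ w : EuclideanSpace ℝ (Fin n), ‖w‖ = 1 →
      (1 - ε) * S - γ ^ p * N ≤ ∑ i, F w i := by
    intro w hw
    obtain ⟨v, hvK, _, _, h1⟩ := hdecomp w hw
    have h2 := (hb v hvK).1
    linarith
  -- the key inequality for unit vectors
  have hkey : ∀ w : EuclideanSpace ℝ (Fin n), ‖w‖ = 1 →
      S * (2 * δ - 2 * γ ^ p - ε) / (1 - γ ^ p) ≤
        ∑ i ∈ Tᶜ, F w i - ∑ i ∈ T, F w i := by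
    intro w hw
    have hsplit : ∑ i ∈ Tᶜ, F w i + ∑ i ∈ T, F w i = ∑ i, F w i :=
      Finset.sum_compl_add_sum T (F w)
    have hTM : ∑ i ∈ T, F w i ≤ M := le_csSup hMSbdd ⟨w, T, hw, hTk, rfl⟩
    have hfull := hlow w hw
    have hNq : γ ^ p * N ≤ γ ^ p * ((1 + ε) * S / (1 - γ ^ p)) :=
      mul_le_mul_of_nonneg_left hNle hqpos.le
    have halg : (1 - ε) * S - γ ^ p * ((1 + ε) * S / (1 - γ ^ p)) -
        2 * ((1/2 - δ) * S / (1 - γ ^ p)) = S * (2 * δ - 2 * γ ^ p - ε) / (1 - γ ^ p) := by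
      field_simp
      ring
    linarith [hMle]
  -- conclude by homogeneity
  by_cases hz : z = (0 : EuclideanSpace ℝ (Fin n))
  · subst hz
    rw [Finset.sum_congr rfl (fun i _ => hFzero i), Finset.sum_congr rfl (fun i _ => hFzero i),
      norm_zero, Real.zero_rpow hp0.ne']
    simp
  · set u : EuclideanSpace ℝ (Fin n) := ‖z‖⁻¹ • z with hudef
    have hu : ‖u‖ = 1 := norm_smul_inv_norm hz
    have hzu : z = ‖z‖ • u := by
      rw [hudef, smul_smul, mul_inv_cancel₀ (norm_ne_zero_iff.2 hz), one_smul]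
    have hFz : ∀ i, F z i = ‖z‖ ^ p * F u i := by
      intro i
      have h := hscale ‖z‖ u i
      rw [← hzu] at h
      rw [h, abs_of_nonneg (norm_nonneg z)]
    have hzp : 0 ≤ ‖z‖ ^ p := Real.rpow_nonneg (norm_nonneg z) p
    have h1 : ∑ i ∈ Tᶜ, F z i = ‖z‖ ^ p * ∑ i ∈ Tᶜ, F u i := by
      rw [Finset.mul_sum]; exact Finset.sum_congr rfl fun i _ => hFz i
    have h2 : ∑ i ∈ T, F z i = ‖z‖ ^ p * ∑ i ∈ T, F u i := by
      rw [Finset.mul_sum]; exact Finset.sum_congr rfl fun i _ => hFz i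
    have h3 := mul_le_mul_of_nonneg_left (hkey u hu) hzp
    rw [ge_iff_le, h1, h2]
    have h4 : S * ‖z‖ ^ p * (2 * δ - 2 * γ ^ p - ε) / (1 - γ ^ p) =
        ‖z‖ ^ p * (S * (2 * δ - 2 * γ ^ p - ε) / (1 - γ ^ p)) := by ring
    rw [h4]
    linarith [h3, mul_sub (‖z‖ ^ p) (∑ i ∈ Tᶜ, F u i) (∑ i ∈ T, F u i)]
end
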